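/- Let τ∞ > 0 and let g : ℝ → ℝ satisfy (M1) and (M2). Then there exists a constant C > 0 depending only on g and τ∞ such that for every m ∈ ℕ, every τ_1, …, τ_m, τ̂_1, …, τ̂_m ∈ [−τ∞, τ∞], and every R ≥ 4, the series Σ_{r≥R} r · max_{k,ℓ∈[m]} |μ_r(g_{τ_k}) μ_r(g'_{τ̂_ℓ})| converges and is at most C. -/

import Mathlib

open scoped BigOperators
open MeasureTheory ProbabilityTheory

noncomputable def hermitePoly (r : ℕ) (y : ℝ) : ℝ :=
  (1 / Real.sqrt (Nat.factorial r)) * (-1 : ℝ) ^ r * Real.exp (y ^ 2 / 2) *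
    iteratedDeriv r (fun t => Real.exp (-(t ^ 2) / 2)) y

noncomputable def hermiteCoeff (h : ℝ → ℝ) (r : ℕ) : ℝ :=
  ∫ y, h y * hermitePoly r y ∂(gaussianReal 0 1)

def dot {d : ℕ} (v w : Fin d → ℝ) : ℝ := ∑ i, v i * w i

/-- Assumption (M1). -/
def CondM1 (g : ℝ → ℝ) (ti : ℝ) : Prop :=
  ContDiff ℝ 3 g ∧
  (∀ n ∈ Finset.Icc 1 3, ∃ B : ℝ, ∀ t, |iteratedDeriv n g t| ≤ B) ∧
  (StrictMonoOn (iteratedDeriv 2 g) (Set.Ioo (-ti) ti) ∨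
    StrictAntiOn (iteratedDeriv 2 g) (Set.Ioo (-ti) ti)) ∧
  ((∀ t ∈ Set.Ioo (-ti) ti, 0 < deriv g t) ∨ (∀ t ∈ Set.Ioo (-ti) ti, deriv g t < 0)) ∧
  ∃ s : ℝ, (s = 1 ∨ s = -1) ∧ ∀ τ ∈ Set.Icc (-ti) ti,
    s = Real.sign (∫ t, deriv g (t + τ) * Real.exp (-(t ^ 2) / 2))

/-- Assumption (M2). -/
def CondM2 (g : ℝ → ℝ) : Prop :=
  (¬ ∃ p : Polynomial ℝ, p.degree ≤ 3 ∧ ∀ t, deriv g t = Polynomial.eval t p) ∧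
  Integrable (fun t => (g t) ^ 2 * Real.exp (-(t ^ 2) / 2))

/-- `S_{r,ℓ} = Σ_k μ_r(g_{τ_k}) μ_r(g'_{τ̂_ℓ}) (⟨ŵ_k, ŵ_ℓ⟩^r − ⟨w_k, ŵ_ℓ⟩^r)`. -/
noncomputable def Sterm {D m : ℕ} (g : ℝ → ℝ) (w wh : Fin m → Fin D → ℝ)
    (τ τh : Fin m → ℝ) (r : ℕ) (l : Fin m) : ℝ :=
  ∑ k, hermiteCoeff (fun t => g (t + τ k)) r *
    hermiteCoeff (fun t => deriv g (t + τh l)) r *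
    ((dot (wh k) (wh l)) ^ r - (dot (w k) (wh l)) ^ r)

/-- `Δ_{W,F}² = ‖Ŵ − W‖_F²`. -/
noncomputable def deltaF2 {D m : ℕ} (w wh : Fin m → Fin D → ℝ) : ℝ :=
  ∑ k, ∑ i, (wh k i - w k i) ^ 2

/-- `Δ_{W,O} = Σ_{k≠k'} |⟨ŵ_k − w_k, ŵ_{k'} − w_{k'}⟩|`. -/
noncomputable def deltaO {D m : ℕ} (w wh : Fin m → Fin D → ℝ) : ℝ :=
  ∑ k, ∑ k', if k = k' then 0 else |dot (wh k - w k) (wh k' - w k')|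


open Polynomial Real
open scoped ENNReal NNReal

noncomputable section HermiteTailAux

def gaussFn : ℝ → ℝ := fun y => Real.exp (-(y ^ 2) / 2)

def hR (k : ℕ) : Polynomial ℝ := (hermite k).map (Int.castRingHom ℝ)

lemma eval_hR (k : ℕ) (y : ℝ) : eval y (hR k) = aeval y (hermite k) := by
  rw [hR, aeval_def, eval₂_eq_eval_map, algebraMap_int_eq]

lemma hR_zero : hR 0 = 1 := by
  simp [hR, hermite_zero]

lemma hR_succ (k : ℕ) : hR (k + 1) = X * hR k - derivative (hR k) := by
  simp [hR, hermite_succ, Polynomial.derivative_map, Polynomial.map_sub, Polynomial.map_mul]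

lemma hR_natDegree_le (k : ℕ) : (hR k).natDegree ≤ k := by
  refine le_trans Polynomial.natDegree_map_le ?_
  rw [Polynomial.natDegree_hermite]

lemma hR_coeff_self (k : ℕ) : (hR k).coeff k = 1 := by
  rw [hR, Polynomial.coeff_map, Polynomial.coeff_hermite_self]
  simp

def psiFn (k : ℕ) : ℝ → ℝ := fun y => (-1 : ℝ) ^ k * eval y (hR k) * gaussFn y

lemma gaussFn_pos (y : ℝ) : 0 < gaussFn y := Real.exp_pos _

lemma iteratedDeriv_gaussFn (k : ℕ) : iteratedDeriv k gaussFn = psiFn k := by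
  funext y
  have h : gaussFn = fun t => Real.exp (-(t ^ 2 / 2)) := by
    funext t; simp [gaussFn, neg_div]
  rw [h, iteratedDeriv_eq_iterate]
  simpa [psiFn, gaussFn, neg_div, eval_hR] using deriv_gaussian_eq_hermite_mul_gaussian k y

lemma exp_pow_le (n : ℕ) (t : ℝ) (ht : 0 ≤ t) : t ^ n ≤ (n.factorial : ℝ) * Real.exp t := by
  have h1 : t ^ n / (n.factorial : ℝ) ≤ Real.exp t := by
    calc t ^ n / (n.factorial : ℝ) ≤ ∑ i ∈ Finset.range (n + 1), t ^ i / (i.factorial : ℝ) := by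
          exact Finset.single_le_sum (f := fun i => t ^ i / (i.factorial : ℝ))
            (fun i _ => by positivity) (Finset.self_mem_range_succ n)
      _ ≤ Real.exp t := Real.sum_le_exp_of_nonneg ht _
  have hn : (0:ℝ) < (n.factorial : ℝ) := by exact_mod_cast Nat.factorial_pos n
  calc t ^ n = (n.factorial : ℝ) * (t ^ n / (n.factorial : ℝ)) := by field_simp
    _ ≤ (n.factorial : ℝ) * Real.exp t := by
        exact mul_le_mul_of_nonneg_left h1 hn.le

lemma integrable_pow_gaussFn (n : ℕ) : Integrable (fun y : ℝ => y ^ n * gaussFn y) := by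
  have hint : Integrable (fun y : ℝ => ((1:ℝ) + 4 ^ n * (n.factorial : ℝ)) * Real.exp (-(1/4) * y ^ 2)) :=
    (integrable_exp_neg_mul_sq (by norm_num : (0:ℝ) < 1/4)).const_mul _
  refine hint.mono' ?_ (Filter.Eventually.of_forall fun y => ?_)
  · exact ((continuous_pow n).mul
      (Real.continuous_exp.comp (by fun_prop))).aestronglyMeasurable
  · have hgsq : gaussFn y = Real.exp (-(1/4) * y ^ 2) * Real.exp (-(1/4) * y ^ 2) := by
      rw [← Real.exp_add, gaussFn]; ring_nf
    have h1 : |y| ^ n ≤ 1 + (y ^ 2) ^ n := by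
      rcases le_total (|y|) 1 with h | h
      · have := pow_le_one₀ (abs_nonneg y) h (n := n)
        nlinarith [pow_nonneg (sq_nonneg y) n]
      · have hy2 : |y| ≤ y ^ 2 := by nlinarith [abs_nonneg y, sq_abs y]
        have := pow_le_pow_left₀ (abs_nonneg y) hy2 n
        rw [← pow_mul] at this
        calc |y| ^ n ≤ (y ^ 2) ^ n := by
              calc |y| ^ n ≤ (y ^ 2) ^ n := by
                    have := pow_le_pow_left₀ (abs_nonneg y) hy2 n
                    simpa [pow_mul] using this
                _ = (y ^ 2) ^ n := rfl
          _ ≤ 1 + (y ^ 2) ^ n := by nlinarith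
    have h2 : (y ^ 2) ^ n ≤ 4 ^ n * (n.factorial : ℝ) * Real.exp ((1/4) * y ^ 2) := by
      have := exp_pow_le n (y ^ 2 / 4) (by positivity)
      have h4 : (y ^ 2) ^ n = 4 ^ n * (y ^ 2 / 4) ^ n := by
        rw [div_pow]; field_simp
      rw [h4]
      calc (4:ℝ) ^ n * (y ^ 2 / 4) ^ n ≤ 4 ^ n * ((n.factorial : ℝ) * Real.exp (y ^ 2 / 4)) := by
            exact mul_le_mul_of_nonneg_left this (by positivity)
        _ = 4 ^ n * (n.factorial : ℝ) * Real.exp ((1/4) * y ^ 2) := by ring_nf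
    have hnorm : ‖y ^ n * gaussFn y‖ = |y| ^ n * gaussFn y := by
      rw [norm_mul, Real.norm_eq_abs, Real.norm_eq_abs, abs_pow,
        abs_of_pos (gaussFn_pos y)]
    rw [hnorm]
    have hexp : Real.exp ((1/4) * y ^ 2) * gaussFn y = Real.exp (-(1/4) * y ^ 2) := by
      rw [gaussFn, ← Real.exp_add]; ring_nf
    have hg := (gaussFn_pos y).le
    calc |y| ^ n * gaussFn y ≤ (1 + (y ^ 2) ^ n) * gaussFn y :=
          mul_le_mul_of_nonneg_right h1 hg
      _ ≤ (1 + 4 ^ n * (n.factorial : ℝ) * Real.exp ((1/4) * y ^ 2)) * gaussFn y := by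
          have : (1:ℝ) + (y ^ 2) ^ n ≤ 1 + 4 ^ n * (n.factorial : ℝ) * Real.exp ((1/4) * y ^ 2) := by
            linarith [h2]
          exact mul_le_mul_of_nonneg_right this hg
      _ = gaussFn y + 4 ^ n * (n.factorial : ℝ) * (Real.exp ((1/4) * y ^ 2) * gaussFn y) := by ring
      _ = gaussFn y + 4 ^ n * (n.factorial : ℝ) * Real.exp (-(1/4) * y ^ 2) := by rw [hexp]
      _ ≤ Real.exp (-(1/4) * y ^ 2) + 4 ^ n * (n.factorial : ℝ) * Real.exp (-(1/4) * y ^ 2) := by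
          have : gaussFn y ≤ Real.exp (-(1/4) * y ^ 2) := by
            rw [gaussFn]
            apply Real.exp_le_exp.mpr
            nlinarith [sq_nonneg y]
          linarith
      _ = ((1:ℝ) + 4 ^ n * (n.factorial : ℝ)) * Real.exp (-(1/4) * y ^ 2) := by ring

lemma integrable_poly_gaussFn (p : Polynomial ℝ) :
    Integrable (fun y : ℝ => eval y p * gaussFn y) := by
  have : (fun y : ℝ => eval y p * gaussFn y) =
      fun y : ℝ => ∑ i ∈ Finset.range (p.natDegree + 1), p.coeff i * (y ^ i * gaussFn y) := by
    funext y
    rw [Polynomial.eval_eq_sum_range, Finset.sum_mul]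
    simp [mul_assoc]
  rw [this]
  exact integrable_finset_sum _ fun i _ => (integrable_pow_gaussFn i).const_mul _

lemma integrable_linGrowth_poly_gaussFn (f : ℝ → ℝ) (hc : Continuous f) (a b : ℝ)
    (hab : ∀ y, |f y| ≤ a + b * |y|) (p : Polynomial ℝ) :
    Integrable (fun y : ℝ => f y * (eval y p * gaussFn y)) := by
  have hint : Integrable (fun y : ℝ =>
      |a| * |eval y p * gaussFn y| + |b| * |eval y (X * p) * gaussFn y|) :=
    ((integrable_poly_gaussFn p).abs.const_mul _).add
      ((integrable_poly_gaussFn (X * p)).abs.const_mul _)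
  refine hint.mono' ?_ (Filter.Eventually.of_forall fun y => ?_)
  · exact (hc.mul ((p.continuous).mul
      (Real.continuous_exp.comp (by fun_prop)))).aestronglyMeasurable
  · have hg := (gaussFn_pos y).le
    have hXp : eval y (X * p) = y * eval y p := by simp
    have h1 : ‖f y * (eval y p * gaussFn y)‖ = |f y| * (|eval y p| * gaussFn y) := by
      rw [Real.norm_eq_abs, abs_mul, abs_mul, abs_of_pos (gaussFn_pos y)]
    rw [h1]
    have h2 : |f y| ≤ |a| + |b| * |y| := by
      calc |f y| ≤ a + b * |y| := hab y
        _ ≤ |a| + |b| * |y| := by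
            have := le_abs_self a
            have hb := le_abs_self b
            nlinarith [abs_nonneg y]
    calc |f y| * (|eval y p| * gaussFn y)
        ≤ (|a| + |b| * |y|) * (|eval y p| * gaussFn y) :=
          mul_le_mul_of_nonneg_right h2 (by positivity)
      _ = |a| * (|eval y p| * gaussFn y) + |b| * (|y| * |eval y p| * gaussFn y) := by ring
      _ = |a| * |eval y p * gaussFn y| + |b| * |eval y (X * p) * gaussFn y| := by
          rw [hXp, abs_mul, abs_mul (y * eval y p), abs_mul y,
            abs_of_pos (gaussFn_pos y)]

lemma integrable_mul_psiFn (f : ℝ → ℝ) (hc : Continuous f) (a b : ℝ)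
    (hab : ∀ y, |f y| ≤ a + b * |y|) (k : ℕ) :
    Integrable (fun y : ℝ => f y * psiFn k y) := by
  have : (fun y : ℝ => f y * psiFn k y) =
      fun y : ℝ => (-1 : ℝ) ^ k * (f y * (eval y (hR k) * gaussFn y)) := by
    funext y; simp only [psiFn]; ring
  rw [this]
  exact (integrable_linGrowth_poly_gaussFn f hc a b hab (hR k)).const_mul _

lemma hasDerivAt_gaussFn (y : ℝ) : HasDerivAt gaussFn (-y * gaussFn y) y := by
  have h1 : HasDerivAt (fun t : ℝ => -(t ^ 2) / 2) (-y) y := by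
    have := ((hasDerivAt_pow 2 y).neg).div_const 2
    refine this.congr_deriv ?_
    push_cast
    ring
  have h2 := h1.exp
  refine h2.congr_deriv ?_
  rw [gaussFn]; ring

lemma hasDerivAt_psiFn (k : ℕ) (y : ℝ) : HasDerivAt (psiFn k) (psiFn (k + 1) y) y := by
  have h1 : HasDerivAt (fun y : ℝ => eval y (hR k))
      (eval y (derivative (hR k))) y := Polynomial.hasDerivAt (hR k) y
  have h2 := ((h1.const_mul ((-1 : ℝ) ^ k)).mul (hasDerivAt_gaussFn y))
  refine h2.congr_deriv ?_
  simp only [psiFn, hR_succ, eval_sub, eval_mul, eval_X, pow_succ]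
  ring

lemma ibp_psiFn (f f' : ℝ → ℝ) (hd : ∀ y, HasDerivAt f (f' y) y) (k : ℕ)
    (h1 : Integrable (fun y : ℝ => f y * psiFn (k + 1) y))
    (h2 : Integrable (fun y : ℝ => f' y * psiFn k y))
    (h3 : Integrable (fun y : ℝ => f y * psiFn k y)) :
    ∫ y : ℝ, f y * psiFn (k + 1) y = -∫ y : ℝ, f' y * psiFn k y := by
  exact MeasureTheory.integral_mul_deriv_eq_deriv_mul_of_integrable
    (fun y _ => hd y) (fun y _ => hasDerivAt_psiFn k y) h1 h2 h3

lemma integral_gaussFn : ∫ y : ℝ, gaussFn y = Real.sqrt (2 * π) := by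
  have h : (fun y : ℝ => gaussFn y) = fun y : ℝ => Real.exp (-(1/2 : ℝ) * y ^ 2) := by
    funext y; rw [gaussFn]; ring_nf
  rw [h, integral_gaussian]
  rw [show π / (1/2 : ℝ) = 2 * π by ring]

lemma integrable_poly_psiFn (q : Polynomial ℝ) (k : ℕ) :
    Integrable (fun y : ℝ => eval y q * psiFn k y) := by
  have : (fun y : ℝ => eval y q * psiFn k y) =
      fun y : ℝ => (-1 : ℝ) ^ k * (eval y (q * hR k) * gaussFn y) := by
    funext y; simp only [psiFn, eval_mul]; ring
  rw [this]
  exact (integrable_poly_gaussFn _).const_mul _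

lemma polyJ (k : ℕ) : ∀ q : Polynomial ℝ,
    ∫ y : ℝ, eval y q * psiFn k y
      = (-1 : ℝ) ^ k * ∫ y : ℝ, eval y (derivative^[k] q) * gaussFn y := by
  induction k with
  | zero =>
    intro q
    simp [psiFn, hR_zero]
  | succ k ih =>
    intro q
    rw [ibp_psiFn (fun y => eval y q) (fun y => eval y (derivative q))
      (fun y => Polynomial.hasDerivAt q y) k (integrable_poly_psiFn q (k+1))
      (integrable_poly_psiFn _ k) (integrable_poly_psiFn q k),
      ih (derivative q)]
    rw [Function.iterate_succ_apply]
    ring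

lemma iterate_derivative_hR_self (k : ℕ) :
    derivative^[k] (hR k) = C ((k.factorial : ℝ)) := by
  have hdeg : (derivative^[k] (hR k)).natDegree = 0 := by
    have h1 := Polynomial.natDegree_iterate_derivative (hR k) k
    have h2 := hR_natDegree_le k
    omega
  have hc : (derivative^[k] (hR k)).coeff 0 = (k.factorial : ℝ) := by
    rw [Polynomial.coeff_iterate_derivative]
    simp [hR_coeff_self, Nat.descFactorial_self]
  rw [Polynomial.eq_C_of_natDegree_le_zero hdeg.le, hc]

lemma integral_hR_sq (k : ℕ) :
    ∫ y : ℝ, (eval y (hR k)) ^ 2 * gaussFn y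
      = (k.factorial : ℝ) * Real.sqrt (2 * π) := by
  have h1 : (fun y : ℝ => eval y (hR k) * psiFn k y)
      = fun y : ℝ => (-1 : ℝ) ^ k * ((eval y (hR k)) ^ 2 * gaussFn y) := by
    funext y; simp only [psiFn]; ring
  have h2 := polyJ k (hR k)
  rw [iterate_derivative_hR_self] at h2
  have h3 : ∀ y : ℝ, eval y (C ((k.factorial : ℝ))) * gaussFn y
      = (k.factorial : ℝ) * gaussFn y := by intro y; simp
  simp only [h3] at h2
  rw [integral_const_mul _ _, integral_gaussFn] at h2
  rw [h1, integral_const_mul _ _] at h2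
  exact mul_left_cancel₀ (pow_ne_zero k (by norm_num : (-1:ℝ) ≠ 0)) h2

lemma integrable_gaussFn : Integrable gaussFn := by
  simpa using integrable_pow_gaussFn 0

lemma J_bound (f : ℝ → ℝ) (B : ℝ) (hB : ∀ y, |f y| ≤ B) (k : ℕ) :
    |∫ y : ℝ, f y * psiFn k y| ≤ B * Real.sqrt (k.factorial) * Real.sqrt (2 * π) := by
  have hB0 : 0 ≤ B := le_trans (abs_nonneg _) (hB 0)
  have hfac : (0:ℝ) < (k.factorial : ℝ) := by exact_mod_cast k.factorial_pos
  set s := Real.sqrt (k.factorial : ℝ) with hsdef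
  have hs0 : 0 < s := Real.sqrt_pos.mpr hfac
  have hss : s * s = (k.factorial : ℝ) := Real.mul_self_sqrt hfac.le
  set D : ℝ → ℝ := fun y =>
    (B * s⁻¹ / 2) * ((eval y (hR k))^2 * gaussFn y) + (B * s / 2) * gaussFn y with hD
  have hint1 : Integrable (fun y : ℝ => (eval y (hR k))^2 * gaussFn y) := by
    have := integrable_poly_gaussFn (hR k * hR k)
    simpa [eval_mul, sq] using this
  have hDint : Integrable D := (hint1.const_mul _).add (integrable_gaussFn.const_mul _)
  have h1 : |∫ y : ℝ, f y * psiFn k y| ≤ ∫ y : ℝ, ‖f y * psiFn k y‖ := by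
    simpa [Real.norm_eq_abs] using
      norm_integral_le_integral_norm (μ := (volume : Measure ℝ)) (fun y : ℝ => f y * psiFn k y)
  have h2 : ∫ y : ℝ, ‖f y * psiFn k y‖ ≤ ∫ y : ℝ, D y := by
    refine integral_mono_of_nonneg (Filter.Eventually.of_forall fun y => norm_nonneg _)
      hDint (Filter.Eventually.of_forall fun y => ?_)
    have hg := (gaussFn_pos y).le
    set u := eval y (hR k) with hu
    have habs2 : |psiFn k y| = |u| * gaussFn y := by
      simp only [psiFn]
      rw [abs_mul, abs_mul, abs_pow, abs_neg, abs_one, one_pow, one_mul,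
        abs_of_pos (gaussFn_pos y)]
    have habs : ‖f y * psiFn k y‖ = |f y| * (|u| * gaussFn y) := by
      rw [Real.norm_eq_abs, abs_mul, habs2]
    show ‖f y * psiFn k y‖ ≤ D y
    rw [habs]
    have k2 : |u| ≤ s⁻¹/2 * u^2 + s/2 := by
      have e1 : 0 ≤ s * (s⁻¹ * |u| - 1)^2 := mul_nonneg hs0.le (sq_nonneg _)
      have e2 : s * s⁻¹ = 1 := mul_inv_cancel₀ hs0.ne'
      have e3 : |u| * |u| = u^2 := by rw [← abs_mul, abs_mul_self, sq]
      have e4 : s * (s⁻¹ * |u| - 1)^2 = s⁻¹ * u^2 - 2*|u| + s := by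
        have e5 : s * (s⁻¹ * |u| - 1)^2
            = (s*s⁻¹)*(s⁻¹*(|u| * |u|)) - 2*((s*s⁻¹)) * |u| + s := by ring
        rw [e5, e2, e3]
        ring
      rw [e4] at e1
      linarith
    calc |f y| * (|u| * gaussFn y) ≤ B * (|u| * gaussFn y) :=
          mul_le_mul_of_nonneg_right (hB y) (by positivity)
      _ ≤ B * ((s⁻¹/2 * u^2 + s/2) * gaussFn y) := by
          refine mul_le_mul_of_nonneg_left ?_ hB0
          exact mul_le_mul_of_nonneg_right k2 hg
      _ = D y := by simp only [hD]; ring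
  have h3 : ∫ y : ℝ, D y = B * s * Real.sqrt (2*π) := by
    simp only [hD]
    rw [integral_add (hint1.const_mul _) (integrable_gaussFn.const_mul _),
      integral_const_mul _ _, integral_const_mul _ _, integral_hR_sq, integral_gaussFn]
    have e4 : s⁻¹ * (k.factorial : ℝ) = s := by
      field_simp
      linarith [hss]
    calc B * s⁻¹ / 2 * ((k.factorial : ℝ) * Real.sqrt (2*π)) + B * s / 2 * Real.sqrt (2*π)
        = B * (s⁻¹ * (k.factorial : ℝ)) * Real.sqrt (2*π) / 2 + B * s / 2 * Real.sqrt (2*π) := by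
          ring
      _ = B * s * Real.sqrt (2*π) := by rw [e4]; ring
  calc |∫ y : ℝ, f y * psiFn k y| ≤ ∫ y : ℝ, ‖f y * psiFn k y‖ := h1
    _ ≤ ∫ y : ℝ, D y := h2
    _ = B * s * Real.sqrt (2*π) := h3

lemma hermitePoly_eq' (r : ℕ) (y : ℝ) :
    hermitePoly r y = (Real.sqrt (r.factorial : ℝ))⁻¹ * eval y (hR r) := by
  have h := congrFun (iteratedDeriv_gaussFn r) y
  have h1 : Real.exp (y^2/2) * gaussFn y = 1 := by
    rw [gaussFn, ← Real.exp_add]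
    norm_num
    ring
  have h2 : ((-1:ℝ)^r) * ((-1:ℝ)^r) = 1 := by
    rw [← pow_add]; exact Even.neg_one_pow ⟨r, rfl⟩
  unfold hermitePoly
  rw [show (fun t : ℝ => Real.exp (-(t ^ 2) / 2)) = gaussFn from rfl, h]
  simp only [psiFn]
  rw [one_div]
  have key : (Real.sqrt (r.factorial : ℝ))⁻¹ * (-1:ℝ)^r * Real.exp (y^2/2) *
      ((-1:ℝ)^r * eval y (hR r) * gaussFn y)
      = (Real.sqrt (r.factorial : ℝ))⁻¹ * eval y (hR r) *
        ((((-1:ℝ)^r) * ((-1:ℝ)^r)) * (Real.exp (y^2/2) * gaussFn y)) := by ring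
  rw [key, h1, h2]
  ring

lemma hermiteCoeff_eq (h : ℝ → ℝ) (r : ℕ) :
    hermiteCoeff h r = (Real.sqrt (2*π))⁻¹ * ((Real.sqrt (r.factorial : ℝ))⁻¹ *
      ((-1:ℝ)^r * ∫ y : ℝ, h y * psiFn r y)) := by
  rw [hermiteCoeff, gaussianReal_of_var_ne_zero 0 one_ne_zero]
  have hmeas : Measurable fun x : ℝ => Real.toNNReal (gaussianPDFReal 0 1 x) :=
    (measurable_gaussianPDFReal 0 1).real_toNNReal
  have hwd : gaussianPDF 0 1 = fun x => ((Real.toNNReal (gaussianPDFReal 0 1 x) : ℝ≥0) : ℝ≥0∞) :=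
    rfl
  rw [hwd, integral_withDensity_eq_integral_smul hmeas]
  have heq : ∀ y : ℝ, (Real.toNNReal (gaussianPDFReal 0 1 y)) • (h y * hermitePoly r y)
      = (Real.sqrt (2*π))⁻¹ * ((Real.sqrt (r.factorial : ℝ))⁻¹ *
          ((-1:ℝ)^r * (h y * psiFn r y))) := by
    intro y
    rw [NNReal.smul_def, Real.coe_toNNReal _ (gaussianPDFReal_nonneg 0 1 y)]
    have hpdf : gaussianPDFReal 0 1 y = (Real.sqrt (2*π))⁻¹ * gaussFn y := by
      unfold gaussianPDFReal gaussFn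
      simp only [NNReal.coe_one, mul_one, sub_zero]
    rw [hpdf, hermitePoly_eq']
    simp only [psiFn, smul_eq_mul]
    have h2 : ((-1:ℝ)^r) * ((-1:ℝ)^r) = 1 := by
      rw [← pow_add]; exact Even.neg_one_pow ⟨r, rfl⟩
    linear_combination (-(Real.sqrt (2*π))⁻¹ * (Real.sqrt (r.factorial : ℝ))⁻¹ *
      h y * eval y (hR r) * gaussFn y) * h2
  simp only [heq]
  rw [MeasureTheory.integral_const_mul, MeasureTheory.integral_const_mul,
    MeasureTheory.integral_const_mul]

lemma abs_hermiteCoeff_eq (h : ℝ → ℝ) (r : ℕ) :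
    |hermiteCoeff h r| = (Real.sqrt (2*π))⁻¹ * ((Real.sqrt (r.factorial : ℝ))⁻¹ *
      |∫ y : ℝ, h y * psiFn r y|) := by
  rw [hermiteCoeff_eq, abs_mul, abs_mul, abs_mul, abs_pow, abs_neg, abs_one, one_pow, one_mul,
    abs_of_nonneg (by positivity : (0:ℝ) ≤ (Real.sqrt (2*π))⁻¹),
    abs_of_nonneg (by positivity : (0:ℝ) ≤ (Real.sqrt (r.factorial : ℝ))⁻¹)]

lemma tail_arith (k : ℕ) :
    ((k:ℝ)+3) * ((Real.sqrt (k.factorial : ℝ) / Real.sqrt (((k+3).factorial : ℝ))) *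
      (Real.sqrt (((k+1).factorial : ℝ)) / Real.sqrt (((k+3).factorial : ℝ)))) ≤
    (((k:ℝ)+1) * Real.sqrt ((k:ℝ)+1))⁻¹ := by
  have hx : (0:ℝ) < (k:ℝ)+1 := by positivity
  have hf0 : (0:ℝ) < (k.factorial : ℝ) := by exact_mod_cast k.factorial_pos
  have h3 : ((k+3).factorial : ℝ) = (((k:ℝ)+3)*((k:ℝ)+2)*((k:ℝ)+1)) * (k.factorial:ℝ) := by
    have h3' : (k+3).factorial = (k+3) * ((k+2) * ((k+1) * k.factorial)) := by
      rw [show k+3 = (k+2)+1 from rfl, Nat.factorial_succ,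
        show k+2 = (k+1)+1 from rfl, Nat.factorial_succ, Nat.factorial_succ]
    rw [h3']; push_cast; ring
  have h1 : ((k+1).factorial : ℝ) = ((k:ℝ)+1) * (k.factorial:ℝ) := by
    rw [Nat.factorial_succ]; push_cast; ring
  set s0 := Real.sqrt (k.factorial : ℝ) with hs0def
  have hs0 : 0 < s0 := Real.sqrt_pos.mpr hf0
  have hc : (0:ℝ) < ((k:ℝ)+3)*((k:ℝ)+2)*((k:ℝ)+1) := by positivity
  have hsq1 : Real.sqrt (((k+1).factorial : ℝ)) = Real.sqrt ((k:ℝ)+1) * s0 := by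
    rw [h1, Real.sqrt_mul hx.le]
  have hsq3 : Real.sqrt (((k+3).factorial : ℝ))
      = Real.sqrt (((k:ℝ)+3)*((k:ℝ)+2)*((k:ℝ)+1)) * s0 := by
    rw [h3, Real.sqrt_mul hc.le]
  set c := Real.sqrt (((k:ℝ)+3)*((k:ℝ)+2)*((k:ℝ)+1)) with hcdef
  have hcpos : 0 < c := Real.sqrt_pos.mpr hc
  have hcc : c * c = ((k:ℝ)+3)*((k:ℝ)+2)*((k:ℝ)+1) := Real.mul_self_sqrt hc.le
  have hsx : Real.sqrt ((k:ℝ)+1) * Real.sqrt ((k:ℝ)+1) = (k:ℝ)+1 := Real.mul_self_sqrt hx.le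
  have hsxpos : 0 < Real.sqrt ((k:ℝ)+1) := Real.sqrt_pos.mpr hx
  rw [hsq1, hsq3]
  have hL : ((k:ℝ)+3) * ((s0 / (c * s0)) * ((Real.sqrt ((k:ℝ)+1) * s0) / (c * s0)))
      = ((k:ℝ)+3) * Real.sqrt ((k:ℝ)+1) / (c * c) := by
    field_simp
  rw [hL, hcc, inv_eq_one_div, div_le_div_iff₀ (by positivity) (by positivity)]
  nlinarith [hsx, hsxpos.le, hx.le, sq_nonneg ((k:ℝ)+1)]

/-- The Hermite-coefficient tail series `Σ_{r ≥ R} r max_{k,ℓ} |μ_r(g_{τ_k}) μ_r(g'_{τ̂_ℓ})|`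
converges and is bounded by a constant depending only on `g` and `τ∞`. -/
theorem hermite_tail_series_bound
    (g : ℝ → ℝ) (tinf : ℝ) (htinf : 0 < tinf) (hM1 : CondM1 g tinf) (hM2 : CondM2 g) :
    ∃ C : ℝ, 0 < C ∧
      ∀ (m : ℕ) (τ τh : Fin m → ℝ),
        (∀ k, τ k ∈ Set.Icc (-tinf) tinf) → (∀ k, τh k ∈ Set.Icc (-tinf) tinf) →
        ∀ R : ℕ, 4 ≤ R →
          Summable (fun r : ℕ => ((r + R : ℕ) : ℝ) *
            ⨆ k : Fin m, ⨆ l : Fin m,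
              |hermiteCoeff (fun t => g (t + τ k)) (r + R) *
                hermiteCoeff (fun t => deriv g (t + τh l)) (r + R)|) ∧
          (∑' r : ℕ, ((r + R : ℕ) : ℝ) *
            ⨆ k : Fin m, ⨆ l : Fin m,
              |hermiteCoeff (fun t => g (t + τ k)) (r + R) *
                hermiteCoeff (fun t => deriv g (t + τh l)) (r + R)|) ≤ C := by
  classical
  obtain ⟨hg3, hbnd, -, -, -⟩ := hM1
  obtain ⟨B1, hB1⟩ := hbnd 1 (by decide)
  obtain ⟨B2, hB2⟩ := hbnd 2 (by decide)
  obtain ⟨B3, hB3⟩ := hbnd 3 (by decide)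
  set B : ℝ := max B1 (max B2 B3) with hBdef
  have hB1' : ∀ t, |iteratedDeriv 1 g t| ≤ B := fun t => (hB1 t).trans (le_max_left _ _)
  have hB2' : ∀ t, |iteratedDeriv 2 g t| ≤ B :=
    fun t => (hB2 t).trans ((le_max_left _ _).trans (le_max_right _ _))
  have hB3' : ∀ t, |iteratedDeriv 3 g t| ≤ B :=
    fun t => (hB3 t).trans ((le_max_right _ _).trans (le_max_right _ _))
  have hB0 : 0 ≤ B := le_trans (abs_nonneg _) (hB1' 0)
  -- derivative and continuity facts
  have hdiff : ∀ n : ℕ, n < 3 → ∀ x : ℝ,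
      HasDerivAt (iteratedDeriv n g) (iteratedDeriv (n+1) g x) x := by
    intro n hn x
    have hd : Differentiable ℝ (iteratedDeriv n g) :=
      hg3.differentiable_iteratedDeriv n (by exact_mod_cast hn)
    rw [iteratedDeriv_succ]
    exact (hd x).hasDerivAt
  have hcont : ∀ n : ℕ, n ≤ 3 → Continuous (iteratedDeriv n g) := by
    intro n hn
    exact hg3.continuous_iteratedDeriv n (by exact_mod_cast hn)
  have hg0growth : ∀ x : ℝ, |g x| ≤ |g 0| + B * |x| := by
    intro x
    have hgd : Differentiable ℝ g := hg3.differentiable (by norm_num)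
    have hmvt := Convex.norm_image_sub_le_of_norm_deriv_le
      (f := g) (s := Set.univ) (fun t _ => hgd t)
      (fun t _ => by
        rw [Real.norm_eq_abs, ← iteratedDeriv_one]
        exact hB1' t)
      convex_univ (Set.mem_univ 0) (Set.mem_univ x)
    have : |g x - g 0| ≤ B * |x| := by
      simpa [Real.norm_eq_abs] using hmvt
    calc |g x| = |(g x - g 0) + g 0| := by ring_nf
      _ ≤ |g x - g 0| + |g 0| := abs_add_le _ _
      _ ≤ |g 0| + B * |x| := by linarith
  -- uniform coefficient bounds
  have main_g : ∀ τ : ℝ, τ ∈ Set.Icc (-tinf) tinf → ∀ k : ℕ,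
      |hermiteCoeff (fun t => g (t + τ)) (k+3)| ≤
        B * (Real.sqrt (k.factorial : ℝ) / Real.sqrt (((k+3).factorial : ℝ))) := by
    intro τ hτ k
    have hτa : |τ| ≤ tinf := abs_le.mpr ⟨hτ.1, hτ.2⟩
    set f0 : ℝ → ℝ := fun t => g (t + τ) with hf0
    set f1 : ℝ → ℝ := fun t => iteratedDeriv 1 g (t + τ) with hf1
    set f2 : ℝ → ℝ := fun t => iteratedDeriv 2 g (t + τ) with hf2
    set f3 : ℝ → ℝ := fun t => iteratedDeriv 3 g (t + τ) with hf3
    have hc0 : Continuous f0 := (hg3.continuous).comp (by fun_prop)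
    have hc1 : Continuous f1 := (hcont 1 (by norm_num)).comp (by fun_prop)
    have hc2 : Continuous f2 := (hcont 2 (by norm_num)).comp (by fun_prop)
    have hc3 : Continuous f3 := (hcont 3 (by norm_num)).comp (by fun_prop)
    have hgrow0 : ∀ y : ℝ, |f0 y| ≤ (|g 0| + B * tinf) + B * |y| := by
      intro y
      have h1 := hg0growth (y + τ)
      have h2 : |y + τ| ≤ |y| + tinf := (abs_add_le y τ).trans (by linarith)
      have : B * |y + τ| ≤ B * (|y| + tinf) := mul_le_mul_of_nonneg_left h2 hB0
      simp only [hf0]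
      nlinarith
    have hgrow1 : ∀ y : ℝ, |f1 y| ≤ B + 0 * |y| := by
      intro y
      have h := hB1' (y + τ)
      have h2 : |f1 y| ≤ B := h
      linarith
    have hgrow2 : ∀ y : ℝ, |f2 y| ≤ B + 0 * |y| := by
      intro y
      have h := hB2' (y + τ)
      have h2 : |f2 y| ≤ B := h
      linarith
    have hgrow3 : ∀ y : ℝ, |f3 y| ≤ B + 0 * |y| := by
      intro y
      have h := hB3' (y + τ)
      have h2 : |f3 y| ≤ B := h
      linarith
    have hd0 : ∀ y : ℝ, HasDerivAt f0 (f1 y) y := by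
      intro y
      have h := hdiff 0 (by norm_num) (y + τ)
      rw [iteratedDeriv_zero] at h
      exact h.comp_add_const y τ
    have hd1 : ∀ y : ℝ, HasDerivAt f1 (f2 y) y := by
      intro y
      exact (hdiff 1 (by norm_num) (y + τ)).comp_add_const y τ
    have hd2 : ∀ y : ℝ, HasDerivAt f2 (f3 y) y := by
      intro y
      exact (hdiff 2 (by norm_num) (y + τ)).comp_add_const y τ
    have I0 : ∀ j : ℕ, Integrable (fun y : ℝ => f0 y * psiFn j y) :=
      fun j => integrable_mul_psiFn f0 hc0 _ _ hgrow0 j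
    have I1 : ∀ j : ℕ, Integrable (fun y : ℝ => f1 y * psiFn j y) :=
      fun j => integrable_mul_psiFn f1 hc1 _ _ hgrow1 j
    have I2 : ∀ j : ℕ, Integrable (fun y : ℝ => f2 y * psiFn j y) :=
      fun j => integrable_mul_psiFn f2 hc2 _ _ hgrow2 j
    have I3 : ∀ j : ℕ, Integrable (fun y : ℝ => f3 y * psiFn j y) :=
      fun j => integrable_mul_psiFn f3 hc3 _ _ hgrow3 j
    have e1 := ibp_psiFn f0 f1 hd0 (k+2) (I0 (k+2+1)) (I1 (k+2)) (I0 (k+2))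
    have e2 := ibp_psiFn f1 f2 hd1 (k+1) (I1 (k+1+1)) (I2 (k+1)) (I1 (k+1))
    have e3 := ibp_psiFn f2 f3 hd2 k (I2 (k+1)) (I3 k) (I2 k)
    rw [show k+2+1 = k+3 from rfl] at e1
    rw [show k+1+1 = k+2 from rfl] at e2
    have hchain : |∫ y : ℝ, f0 y * psiFn (k+3) y| = |∫ y : ℝ, f3 y * psiFn k y| := by
      rw [e1, abs_neg, e2, abs_neg, e3, abs_neg]
    have hJ := J_bound f3 B (fun y => by simpa using hgrow3 y) k
    have h2π : (0:ℝ) < Real.sqrt (2*π) := Real.sqrt_pos.mpr (by positivity)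
    rw [abs_hermiteCoeff_eq, hchain]
    calc (Real.sqrt (2*π))⁻¹ * ((Real.sqrt (((k+3).factorial : ℝ)))⁻¹ *
          |∫ y : ℝ, f3 y * psiFn k y|)
        ≤ (Real.sqrt (2*π))⁻¹ * ((Real.sqrt (((k+3).factorial : ℝ)))⁻¹ *
          (B * Real.sqrt (k.factorial : ℝ) * Real.sqrt (2*π))) := by
          refine mul_le_mul_of_nonneg_left (mul_le_mul_of_nonneg_left hJ (by positivity))
            (by positivity)
      _ = B * (Real.sqrt (k.factorial : ℝ) / Real.sqrt (((k+3).factorial : ℝ))) := by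
          field_simp
  have main_g' : ∀ τ : ℝ, τ ∈ Set.Icc (-tinf) tinf → ∀ k : ℕ,
      |hermiteCoeff (fun t => deriv g (t + τ)) (k+2)| ≤
        B * (Real.sqrt (k.factorial : ℝ) / Real.sqrt (((k+2).factorial : ℝ))) := by
    intro τ hτ k
    have hfeq : (fun t => deriv g (t + τ)) = fun t => iteratedDeriv 1 g (t + τ) := by
      funext t; rw [iteratedDeriv_one]
    rw [hfeq]
    set f1 : ℝ → ℝ := fun t => iteratedDeriv 1 g (t + τ) with hf1
    set f2 : ℝ → ℝ := fun t => iteratedDeriv 2 g (t + τ) with hf2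
    set f3 : ℝ → ℝ := fun t => iteratedDeriv 3 g (t + τ) with hf3
    have hc1 : Continuous f1 := (hcont 1 (by norm_num)).comp (by fun_prop)
    have hc2 : Continuous f2 := (hcont 2 (by norm_num)).comp (by fun_prop)
    have hc3 : Continuous f3 := (hcont 3 (by norm_num)).comp (by fun_prop)
    have hgrow1 : ∀ y : ℝ, |f1 y| ≤ B + 0 * |y| := by
      intro y
      have h := hB1' (y + τ)
      have h2 : |f1 y| ≤ B := h
      linarith
    have hgrow2 : ∀ y : ℝ, |f2 y| ≤ B + 0 * |y| := by
      intro y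
      have h := hB2' (y + τ)
      have h2 : |f2 y| ≤ B := h
      linarith
    have hgrow3 : ∀ y : ℝ, |f3 y| ≤ B + 0 * |y| := by
      intro y
      have h := hB3' (y + τ)
      have h2 : |f3 y| ≤ B := h
      linarith
    have hd1 : ∀ y : ℝ, HasDerivAt f1 (f2 y) y := by
      intro y
      exact (hdiff 1 (by norm_num) (y + τ)).comp_add_const y τ
    have hd2 : ∀ y : ℝ, HasDerivAt f2 (f3 y) y := by
      intro y
      exact (hdiff 2 (by norm_num) (y + τ)).comp_add_const y τ
    have I1 : ∀ j : ℕ, Integrable (fun y : ℝ => f1 y * psiFn j y) :=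
      fun j => integrable_mul_psiFn f1 hc1 _ _ hgrow1 j
    have I2 : ∀ j : ℕ, Integrable (fun y : ℝ => f2 y * psiFn j y) :=
      fun j => integrable_mul_psiFn f2 hc2 _ _ hgrow2 j
    have I3 : ∀ j : ℕ, Integrable (fun y : ℝ => f3 y * psiFn j y) :=
      fun j => integrable_mul_psiFn f3 hc3 _ _ hgrow3 j
    have e2 := ibp_psiFn f1 f2 hd1 (k+1) (I1 (k+1+1)) (I2 (k+1)) (I1 (k+1))
    have e3 := ibp_psiFn f2 f3 hd2 k (I2 (k+1)) (I3 k) (I2 k)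
    rw [show k+1+1 = k+2 from rfl] at e2
    have hchain : |∫ y : ℝ, f1 y * psiFn (k+2) y| = |∫ y : ℝ, f3 y * psiFn k y| := by
      rw [e2, abs_neg, e3, abs_neg]
    have hJ := J_bound f3 B (fun y => by simpa using hgrow3 y) k
    have h2π : (0:ℝ) < Real.sqrt (2*π) := Real.sqrt_pos.mpr (by positivity)
    rw [abs_hermiteCoeff_eq, hchain]
    calc (Real.sqrt (2*π))⁻¹ * ((Real.sqrt (((k+2).factorial : ℝ)))⁻¹ *
          |∫ y : ℝ, f3 y * psiFn k y|)
        ≤ (Real.sqrt (2*π))⁻¹ * ((Real.sqrt (((k+2).factorial : ℝ)))⁻¹ *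
          (B * Real.sqrt (k.factorial : ℝ) * Real.sqrt (2*π))) := by
          refine mul_le_mul_of_nonneg_left (mul_le_mul_of_nonneg_left hJ (by positivity))
            (by positivity)
      _ = B * (Real.sqrt (k.factorial : ℝ) / Real.sqrt (((k+2).factorial : ℝ))) := by
          field_simp
  -- the summable weight
  set w : ℕ → ℝ := fun n => (((n:ℝ)+1) * Real.sqrt ((n:ℝ)+1))⁻¹ with hwdef
  have hw_nonneg : ∀ n, 0 ≤ w n := fun n => by positivity
  have hw_summable : Summable w := by
    have h0 : Summable (fun n : ℕ => 1 / (n:ℝ) ^ ((3:ℝ)/2)) :=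
      Real.summable_one_div_nat_rpow.mpr (by norm_num)
    have h1 : Summable (fun n : ℕ => 1 / ((n+1:ℕ):ℝ) ^ ((3:ℝ)/2)) :=
      (summable_nat_add_iff (f := fun n : ℕ => 1 / (n:ℝ) ^ ((3:ℝ)/2)) 1).mpr h0
    refine h1.congr fun n => ?_
    have hx : (0:ℝ) < (n:ℝ)+1 := by positivity
    have hcast : ((n+1:ℕ):ℝ) = (n:ℝ)+1 := by push_cast; ring
    rw [hcast, show (3:ℝ)/2 = 1 + 1/2 by norm_num, Real.rpow_add hx, Real.rpow_one,
      ← Real.sqrt_eq_rpow, one_div]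
  refine ⟨B^2 * (∑' n, w n) + 1, ?_, ?_⟩
  · have : 0 ≤ B^2 * (∑' n, w n) :=
      mul_nonneg (by positivity) (tsum_nonneg hw_nonneg)
    linarith
  intro m τ τh hτ hτh R hRge
  -- per-term bound
  have hterm : ∀ n : ℕ, ((n + R : ℕ) : ℝ) *
      (⨆ k : Fin m, ⨆ l : Fin m,
        |hermiteCoeff (fun t => g (t + τ k)) (n + R) *
          hermiteCoeff (fun t => deriv g (t + τh l)) (n + R)|) ≤ B^2 * w n := by
    intro n
    obtain ⟨k, hk, hkn⟩ : ∃ k : ℕ, n + R = k + 3 ∧ n + 1 ≤ k := ⟨n + R - 3, by omega, by omega⟩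
    set M : ℝ := (B * (Real.sqrt (k.factorial : ℝ) / Real.sqrt (((k+3).factorial : ℝ)))) *
      (B * (Real.sqrt ((k+1).factorial : ℝ) / Real.sqrt (((k+3).factorial : ℝ)))) with hM
    have hM0 : 0 ≤ M := by positivity
    have hsup : (⨆ k' : Fin m, ⨆ l : Fin m,
        |hermiteCoeff (fun t => g (t + τ k')) (n + R) *
          hermiteCoeff (fun t => deriv g (t + τh l)) (n + R)|) ≤ M := by
      refine Real.iSup_le (fun k' => Real.iSup_le (fun l => ?_) hM0) hM0
      rw [hk, abs_mul]
      have ha := main_g (τ k') (hτ k') k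
      have hb := main_g' (τh l) (hτh l) (k+1)
      rw [show k+1+2 = k+3 by omega] at hb
      exact mul_le_mul ha hb (abs_nonneg _) (by positivity)
    have hsup0 : 0 ≤ (⨆ k' : Fin m, ⨆ l : Fin m,
        |hermiteCoeff (fun t => g (t + τ k')) (n + R) *
          hermiteCoeff (fun t => deriv g (t + τh l)) (n + R)|) :=
      Real.iSup_nonneg fun k' => Real.iSup_nonneg fun l => abs_nonneg _
    have hr3 : ((n + R : ℕ) : ℝ) = (k:ℝ) + 3 := by rw [hk]; push_cast; ring
    calc ((n + R : ℕ) : ℝ) * (⨆ k' : Fin m, ⨆ l : Fin m,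
          |hermiteCoeff (fun t => g (t + τ k')) (n + R) *
            hermiteCoeff (fun t => deriv g (t + τh l)) (n + R)|)
        ≤ ((n + R : ℕ) : ℝ) * M := by
          exact mul_le_mul_of_nonneg_left hsup (by positivity)
      _ = B^2 * (((k:ℝ)+3) * ((Real.sqrt (k.factorial : ℝ) / Real.sqrt (((k+3).factorial : ℝ))) *
          (Real.sqrt ((k+1).factorial : ℝ) / Real.sqrt (((k+3).factorial : ℝ))))) := by
          rw [hr3, hM]; ring
      _ ≤ B^2 * (((k:ℝ)+1) * Real.sqrt ((k:ℝ)+1))⁻¹ :=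
          mul_le_mul_of_nonneg_left (tail_arith k) (by positivity)
      _ ≤ B^2 * w n := by
          refine mul_le_mul_of_nonneg_left ?_ (by positivity)
          simp only [hwdef]
          have hkn' : ((n:ℝ)+1) ≤ ((k:ℝ)+1) := by
            have : (n:ℝ) ≤ (k:ℝ) := by exact_mod_cast Nat.le_of_succ_le hkn
            linarith
          have h2 : ((n:ℝ)+1) * Real.sqrt ((n:ℝ)+1) ≤ ((k:ℝ)+1) * Real.sqrt ((k:ℝ)+1) :=
            mul_le_mul hkn' (Real.sqrt_le_sqrt hkn') (Real.sqrt_nonneg _) (by positivity)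
          exact inv_anti₀ (by positivity) h2
  have hterm_nonneg : ∀ n : ℕ, 0 ≤ ((n + R : ℕ) : ℝ) *
      (⨆ k : Fin m, ⨆ l : Fin m,
        |hermiteCoeff (fun t => g (t + τ k)) (n + R) *
          hermiteCoeff (fun t => deriv g (t + τh l)) (n + R)|) := by
    intro n
    exact mul_nonneg (by positivity)
      (Real.iSup_nonneg fun k' => Real.iSup_nonneg fun l => abs_nonneg _)
  have hBw : Summable (fun n : ℕ => B^2 * w n) := hw_summable.mul_left (B^2)
  have hsummable : Summable (fun r : ℕ => ((r + R : ℕ) : ℝ) *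
      ⨆ k : Fin m, ⨆ l : Fin m,
        |hermiteCoeff (fun t => g (t + τ k)) (r + R) *
          hermiteCoeff (fun t => deriv g (t + τh l)) (r + R)|) :=
    Summable.of_nonneg_of_le hterm_nonneg hterm hBw
  refine ⟨hsummable, ?_⟩
  calc (∑' r : ℕ, ((r + R : ℕ) : ℝ) *
        ⨆ k : Fin m, ⨆ l : Fin m,
          |hermiteCoeff (fun t => g (t + τ k)) (r + R) *
            hermiteCoeff (fun t => deriv g (t + τh l)) (r + R)|)
      ≤ ∑' n : ℕ, B^2 * w n := Summable.tsum_le_tsum hterm hsummable hBw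
    _ = B^2 * ∑' n : ℕ, w n := tsum_mul_left
    _ ≤ B^2 * (∑' n, w n) + 1 := by linarith
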